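/- arXiv:2405.17887 — 2 statements merged into one kernel-verified Lean document; each statement's English description precedes it below -/
import Mathlib

section
/- Let F and F' be totally real number fields of degree n, both realized as subfields of ℝ (so that the inclusion map is one of the n real embeddings of each field), and suppose F ≠ F'. Then the images of the Hilbert modular groups Γ_F and Γ_{F'} in GL₂⁺(ℝ)ⁿ (embedded via the n real embeddings, with the inclusion embedding placed first) are not conjugate in GL₂⁺(ℝ)ⁿ; that is, there is no A ∈ GL₂⁺(ℝ)ⁿ with A Γ_F A⁻¹ = Γ_{F'}. -/
open NumberField Matrix nonZeroDivisors

/-- The Hilbert modular group `Γ_F = Γ₀(𝒪, 𝒪)` of a number field `F`, viewed as the set of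
`2 × 2` matrices `(a b; c d)` with entries in `F` such that `a, d ∈ 𝒪`, `b ∈ 𝔡⁻¹`, `c ∈ 𝔡`
(where `𝔡` is the different ideal) and totally positive unit determinant. -/
noncomputable def HilbertGamma (F : Type*) [Field F] [NumberField F] :
    Set (Matrix (Fin 2) (Fin 2) F) :=
  {γ | γ 0 0 ∈ (algebraMap (𝓞 F) F).range ∧ γ 1 1 ∈ (algebraMap (𝓞 F) F).range ∧
    γ 0 1 ∈ (↑(differentIdeal ℤ (𝓞 F)) : FractionalIdeal (𝓞 F)⁰ F)⁻¹ ∧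
    γ 1 0 ∈ (↑(differentIdeal ℤ (𝓞 F)) : FractionalIdeal (𝓞 F)⁰ F) ∧
    (∃ ε : (𝓞 F)ˣ, algebraMap (𝓞 F) F ε = γ.det) ∧
    (∀ τ : F →+* ℝ, 0 < τ γ.det)}

/-- The image of the Hilbert modular group of a subfield `F ⊆ ℝ` inside
`GL₂⁺(ℝ)ⁿ ⊆ (M₂(ℝ))ⁿ`, obtained by applying a family `e` of real embeddings of `F`
entrywise. -/
noncomputable def HilbertGammaImage (F : Subfield ℝ) [NumberField ↥F] {n : ℕ}
    (e : Fin n → (↥F →+* ℝ)) : Set (Fin n → Matrix (Fin 2) (Fin 2) ℝ) :=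
  {g | ∃ γ ∈ HilbertGamma ↥F, ∀ i, g i = (e i).mapMatrix γ}

/-- The coercion of the different ideal is a nonzero fractional ideal. -/
lemma aux_different_ne_zero (F : Type*) [Field F] [NumberField F] :
    (↑(differentIdeal ℤ (𝓞 F)) : FractionalIdeal (𝓞 F)⁰ F) ≠ 0 := by
  rw [coeIdeal_differentIdeal ℤ ℚ F (𝓞 F)]
  exact inv_ne_zero (FractionalIdeal.dual_ne_zero ℤ ℚ one_ne_zero)

/-- The unipotent-type matrix `(1+bc, b; c, 1)` lies in the Hilbert modular group. -/
lemma aux_mem_hilbertGamma (F : Type*) [Field F] [NumberField F] {b c : F}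
    (hb : b ∈ (↑(differentIdeal ℤ (𝓞 F)) : FractionalIdeal (𝓞 F)⁰ F)⁻¹)
    (hc : c ∈ (↑(differentIdeal ℤ (𝓞 F)) : FractionalIdeal (𝓞 F)⁰ F)) :
    !![1 + b * c, b; c, 1] ∈ HilbertGamma F := by
  have hbc : b * c ∈ (1 : FractionalIdeal (𝓞 F)⁰ F) := by
    have h1 := FractionalIdeal.mul_mem_mul hb hc
    rw [mul_comm] at h1
    rwa [mul_inv_cancel₀ (aux_different_ne_zero F)] at h1
  obtain ⟨x, hx⟩ := (FractionalIdeal.mem_one_iff _).mp hbc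
  have hdet : (!![1 + b * c, b; c, 1] : Matrix (Fin 2) (Fin 2) F).det = 1 := by
    simp [Matrix.det_fin_two_of]
  refine ⟨⟨1 + x, by simp [hx]⟩, ⟨1, by simp⟩, by simpa using hb, by simpa using hc,
    ⟨1, by simp [hdet]⟩, fun τ => by simp [hdet]⟩

/-- If a subfield `S` of `ℝ` contains the traces of all elements of `Γ_F`, then `F ≤ S`. -/
lemma aux_le_of_traces (F : Subfield ℝ) [NumberField ↥F] (S : Subfield ℝ)
    (h : ∀ γ ∈ HilbertGamma ↥F, F.subtype γ.trace ∈ S) : F ≤ S := by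
  -- first: products b*c with b ∈ 𝔡⁻¹, c ∈ 𝔡 land in S
  have hprod : ∀ b ∈ (↑(differentIdeal ℤ (𝓞 ↥F)) : FractionalIdeal (𝓞 ↥F)⁰ ↥F)⁻¹,
      ∀ c ∈ (↑(differentIdeal ℤ (𝓞 ↥F)) : FractionalIdeal (𝓞 ↥F)⁰ ↥F),
      F.subtype (b * c) ∈ S := by
    intro b hb c hc
    have htr := h _ (aux_mem_hilbertGamma ↥F hb hc)
    have : (!![1 + b * c, b; c, 1] : Matrix (Fin 2) (Fin 2) ↥F).trace = 2 + b * c := by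
      rw [Matrix.trace_fin_two]; simp; ring
    rw [this, map_add] at htr
    have h2 : F.subtype (2 : ↥F) ∈ S := by
      rw [map_ofNat]; have := intCast_mem S (2 : ℤ); simpa using this
    have := S.sub_mem htr h2
    simpa using this
  -- next: elements of the ring of integers land in S
  have hint : ∀ x : 𝓞 ↥F, F.subtype (algebraMap (𝓞 ↥F) ↥F x) ∈ S := by
    intro x
    have hx1 : algebraMap (𝓞 ↥F) ↥F x ∈ (1 : FractionalIdeal (𝓞 ↥F)⁰ ↥F) :=
      (FractionalIdeal.mem_one_iff _).mpr ⟨x, rfl⟩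
    have hmul : (↑(differentIdeal ℤ (𝓞 ↥F)) : FractionalIdeal (𝓞 ↥F)⁰ ↥F)⁻¹ *
        ↑(differentIdeal ℤ (𝓞 ↥F)) = 1 := by
      rw [mul_comm]; exact mul_inv_cancel₀ (aux_different_ne_zero ↥F)
    rw [← hmul, ← FractionalIdeal.mem_coe, FractionalIdeal.coe_mul] at hx1
    refine Submodule.mul_induction_on hx1 (fun m hm n hn => ?_) (fun a b ha hb => ?_)
    · exact hprod m (FractionalIdeal.mem_coe.mp hm) n (FractionalIdeal.mem_coe.mp hn)
    · rw [map_add]; exact S.add_mem ha hb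
  -- finally: every element of F is a quotient of integers
  intro x hx
  obtain ⟨a, b, hb, hab⟩ := @IsFractionRing.div_surjective (𝓞 ↥F) _ ↥F _ _ _ (⟨x, hx⟩ : ↥F)
  have hmem : F.subtype (⟨x, hx⟩ : ↥F) ∈ S := by
    rw [← hab, map_div₀]
    exact S.div_mem (hint a) (hint b)
  exact hmem

/-- **Non-conjugacy of Hilbert modular groups of distinct fields.**
If `F ≠ F'` are totally real number fields of degree `n`, realized as subfields of `ℝ`,
then the images of `Γ_F` and `Γ_{F'}` in `GL₂⁺(ℝ)ⁿ` (embedded via the `n` real embeddings,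
the inclusion placed first) are not conjugate in `GL₂⁺(ℝ)ⁿ`. -/
theorem hilbertGamma_not_conjugate {n : ℕ} (hn : 0 < n)
    (F F' : Subfield ℝ) [NumberField ↥F] [NumberField ↥F']
    (htrF : ∀ φ : ↥F →+* ℂ, ComplexEmbedding.IsReal φ)
    (htrF' : ∀ φ : ↥F' →+* ℂ, ComplexEmbedding.IsReal φ)
    (hdegF : Module.finrank ℚ ↥F = n) (hdegF' : Module.finrank ℚ ↥F' = n)
    (e : Fin n ≃ (↥F →+* ℝ)) (e' : Fin n ≃ (↥F' →+* ℝ))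
    (he : e ⟨0, hn⟩ = F.subtype) (he' : e' ⟨0, hn⟩ = F'.subtype)
    (hne : F ≠ F') :
    ¬ ∃ A : Fin n → Matrix (Fin 2) (Fin 2) ℝ, (∀ i, 0 < (A i).det) ∧
      (fun g i => A i * g i * (A i)⁻¹) '' HilbertGammaImage F e =
        HilbertGammaImage F' e' := by
  rintro ⟨A, hA, hconj⟩
  set i0 : Fin n := ⟨0, hn⟩
  have hAinv : ∀ i, (A i)⁻¹ * A i = 1 := fun i =>
    Matrix.nonsing_inv_mul _ (ne_of_gt (hA i)).isUnit
  have htrace : ∀ (M : Matrix (Fin 2) (Fin 2) ℝ),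
      (A i0 * M * (A i0)⁻¹).trace = M.trace := by
    intro M
    rw [Matrix.trace_mul_comm, ← Matrix.mul_assoc, hAinv, Matrix.one_mul]
  have key : ∀ (γ' : Matrix (Fin 2) (Fin 2) ↥F'), γ' ∈ HilbertGamma ↥F' →
      ∃ γ ∈ HilbertGamma ↥F, F'.subtype γ'.trace = F.subtype γ.trace := by
    intro γ' hγ'
    have hmem : (fun i => (e' i).mapMatrix γ') ∈ HilbertGammaImage F' e' :=
      ⟨γ', hγ', fun i => rfl⟩
    rw [← hconj] at hmem
    obtain ⟨g, hg, hgeq⟩ := hmem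
    obtain ⟨γ, hγ, hγeq⟩ := hg
    refine ⟨γ, hγ, ?_⟩
    have h0 : A i0 * g i0 * (A i0)⁻¹ = (e' i0).mapMatrix γ' := congrFun hgeq i0
    have := congrArg Matrix.trace h0
    rw [htrace, hγeq i0] at this
    have htr1 : ((e' i0).mapMatrix γ').trace = (e' i0) γ'.trace := by
      simp [Matrix.trace_fin_two, RingHom.mapMatrix_apply, map_add]
    have htr2 : ((e i0).mapMatrix γ).trace = (e i0) γ.trace := by
      simp [Matrix.trace_fin_two, RingHom.mapMatrix_apply, map_add]
    rw [htr1, htr2, he, he'] at this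
    exact this.symm
  have key' : ∀ (γ : Matrix (Fin 2) (Fin 2) ↥F), γ ∈ HilbertGamma ↥F →
      ∃ γ' ∈ HilbertGamma ↥F', F.subtype γ.trace = F'.subtype γ'.trace := by
    intro γ hγ
    have hmem : (fun i => (e i).mapMatrix γ) ∈ HilbertGammaImage F e :=
      ⟨γ, hγ, fun i => rfl⟩
    have hmem2 : (fun i => A i * (e i).mapMatrix γ * (A i)⁻¹) ∈ HilbertGammaImage F' e' := by
      rw [← hconj]; exact ⟨_, hmem, rfl⟩
    obtain ⟨γ', hγ', hγ'eq⟩ := hmem2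
    refine ⟨γ', hγ', ?_⟩
    have h0 : A i0 * (e i0).mapMatrix γ * (A i0)⁻¹ = (e' i0).mapMatrix γ' := hγ'eq i0
    have := congrArg Matrix.trace h0
    rw [htrace] at this
    have htr1 : ((e' i0).mapMatrix γ').trace = (e' i0) γ'.trace := by
      simp [Matrix.trace_fin_two, RingHom.mapMatrix_apply, map_add]
    have htr2 : ((e i0).mapMatrix γ).trace = (e i0) γ.trace := by
      simp [Matrix.trace_fin_two, RingHom.mapMatrix_apply, map_add]
    rw [htr1, htr2, he, he'] at this
    exact this
  have hle1 : F' ≤ F := by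
    refine aux_le_of_traces F' F (fun γ' hγ' => ?_)
    obtain ⟨γ, hγ, heq⟩ := key γ' hγ'
    rw [heq]
    exact (γ.trace : ↥F).2
  have hle2 : F ≤ F' := by
    refine aux_le_of_traces F F' (fun γ hγ => ?_)
    obtain ⟨γ', hγ', heq⟩ := key' γ hγ
    rw [heq]
    exact (γ'.trace : ↥F').2
  exact hne (le_antisymm hle2 hle1)
end

section
/- Let K be a number field and suppose the unit group of its ring of integers contains a subgroup isomorphic to the free abelian group ℤ^r. Then the degree [K : ℚ] is at least r + 1. -/
open NumberField

set_option maxSynthPendingDepth 2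

/-- If the unit group of the ring of integers of a number field `K` contains a subgroup
isomorphic to the free abelian group `ℤ^r`, then `[K : ℚ] ≥ r + 1`. -/
theorem finrank_ge_of_free_subgroup_of_units (K : Type*) [Field K] [NumberField K] (r : ℕ)
    (H : Subgroup (𝓞 K)ˣ) (h : Nonempty (H ≃* Multiplicative (Fin r → ℤ))) :
    r + 1 ≤ Module.finrank ℚ K := by
  obtain ⟨e⟩ := h
  -- the composite map Multiplicative (Fin r → ℤ) →* (𝓞 K)ˣ ⧸ torsion K
  set g : Multiplicative (Fin r → ℤ) →* (𝓞 K)ˣ ⧸ (Units.torsion K) :=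
    (QuotientGroup.mk' (Units.torsion K)).comp (H.subtype.comp e.symm.toMonoidHom) with hg
  have hginj : Function.Injective g := by
    rw [← MonoidHom.ker_eq_bot_iff, eq_bot_iff]
    intro x hx
    have hmem : ((e.symm x : H) : (𝓞 K)ˣ) ∈ Units.torsion K := by
      simpa [hg, QuotientGroup.eq_one_iff] using hx
    rw [Units.torsion, CommGroup.mem_torsion] at hmem
    have hfin : IsOfFinOrder (e.symm x : H) :=
      Submonoid.isOfFinOrder_coe.mp hmem
    have hfinx : IsOfFinOrder x := by
      have := e.toMonoidHom.isOfFinOrder hfin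
      simpa using this
    -- ℤ^r is torsion free
    obtain ⟨n, hn, hxn⟩ := hfinx.exists_pow_eq_one
    have : (n : ℤ) • x.toAdd = 0 := by
      have : x ^ n = 1 := hxn
      have := congrArg Multiplicative.toAdd this
      simpa [← ofAdd_nsmul] using this
    have hx0 : x.toAdd = 0 := by
      have hn' : (n : ℤ) ≠ 0 := by exact_mod_cast hn.ne'
      exact (smul_eq_zero.mp this).resolve_left hn'
    simp only [Subgroup.mem_bot]
    rcases x with x
    simpa using hx0
  -- additive version, as a ℤ-linear map
  let f : (Fin r → ℤ) →ₗ[ℤ] Additive ((𝓞 K)ˣ ⧸ (Units.torsion K)) :=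
    (MonoidHom.toAdditiveRight g).toIntLinearMap
  have hfinj : Function.Injective f := fun a b hab => by
    apply hginj
    exact hab
  haveI : Module.Finite ℤ (Additive ((𝓞 K)ˣ ⧸ (Units.torsion K))) :=
    Module.Finite.of_basis (Units.basisModTorsion K)
  have hr : r ≤ Units.rank K := by
    have := LinearMap.finrank_le_finrank_of_injective hfinj
    rwa [Units.rank_modTorsion, Module.finrank_fin_fun] at this
  have h1 : 1 ≤ Fintype.card (InfinitePlace K) := Fintype.card_pos
  have h2 : Fintype.card (InfinitePlace K) ≤ Module.finrank ℚ K := by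
    rw [InfinitePlace.card_eq_nrRealPlaces_add_nrComplexPlaces,
      ← InfinitePlace.card_add_two_mul_card_eq_rank]
    omega
  have hrank : Units.rank K = Fintype.card (InfinitePlace K) - 1 := rfl
  omega
end
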